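/- arXiv:1608.04685 — 6 statements merged into one kernel-verified Lean document; each statement's English description precedes it below -/
import Mathlib

section
/- For every real number k, 1/(1+|k|) ≤ tanh(k)/k ≤ 2/(1+|k|), where the quotient tanh(k)/k is understood to equal 1 at k = 0. -/
/-- The square of the water-wave phase speed: `c_ww²(k) = tanh k / k`, with value `1` at `k = 0`. -/
noncomputable def cww2 (k : ℝ) : ℝ := if k = 0 then 1 else Real.tanh k / k

lemma sinh_le_mul_cosh {x : ℝ} (hx : 0 ≤ x) : Real.sinh x ≤ x * Real.cosh x := by
  have hmono : MonotoneOn (fun x : ℝ => x * Real.cosh x - Real.sinh x) (Set.Ici 0) := by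
    apply monotoneOn_of_deriv_nonneg (convex_Ici 0)
    · fun_prop
    · fun_prop
    · intro y hy
      rw [interior_Ici] at hy
      have : HasDerivAt (fun x : ℝ => x * Real.cosh x - Real.sinh x)
          (1 * Real.cosh y + y * Real.sinh y - Real.cosh y) y := by
        exact ((hasDerivAt_id y).mul (Real.hasDerivAt_cosh y)).sub (Real.hasDerivAt_sinh y)
      rw [this.deriv]
      have h1 : 0 ≤ Real.sinh y := Real.sinh_nonneg_iff.mpr (le_of_lt hy)
      nlinarith [le_of_lt (Set.mem_Ioi.mp hy)]
  have := hmono (Set.self_mem_Ici) (Set.mem_Ici.mpr hx) hx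
  simp at this
  linarith

lemma cww2_bounds_nonneg {k : ℝ} (hk : 0 ≤ k) :
    1 / (1 + k) ≤ cww2 k ∧ cww2 k ≤ 2 / (1 + k) := by
  rcases eq_or_lt_of_le hk with h0 | h0
  · simp [cww2, ← h0]
  · have hk0 : k ≠ 0 := ne_of_gt h0
    rw [cww2, if_neg hk0]
    have hc : 0 < Real.cosh k := Real.cosh_pos k
    have hs : Real.sinh k ≤ k * Real.cosh k := sinh_le_mul_cosh hk
    have hE : 1 + 2 * k ≤ Real.exp (2 * k) := by
      have := Real.add_one_le_exp (2 * k); linarith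
    have htanh : Real.tanh k = (Real.exp (2*k) - 1) / (Real.exp (2*k) + 1) := by
      rw [Real.tanh_eq_sinh_div_cosh, Real.sinh_eq, Real.cosh_eq]
      have h1 : Real.exp k > 0 := Real.exp_pos k
      have h2 : Real.exp (-k) > 0 := Real.exp_pos (-k)
      have h3 : Real.exp (2*k) = Real.exp k * Real.exp k := by
        rw [← Real.exp_add]; ring_nf
      have h4 : Real.exp k * Real.exp (-k) = 1 := by
        rw [← Real.exp_add]; simp
      rw [h3]
      field_simp
      nlinarith
    have hEpos : (0:ℝ) < Real.exp (2*k) + 1 := by positivity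
    constructor
    · rw [htanh, div_div, div_le_div_iff₀ (by positivity) (by positivity)]
      nlinarith
    · rcases le_or_gt k 1 with h1 | h1
      · have ht : Real.tanh k ≤ k := by
          rw [Real.tanh_eq_sinh_div_cosh, div_le_iff₀ hc]; exact hs
        have : Real.tanh k / k ≤ 1 := by
          rw [div_le_one h0]
          linarith [ht, h0.le]
        calc Real.tanh k / k ≤ 1 := this
          _ ≤ 2 / (1 + k) := by rw [le_div_iff₀ (by linarith)]; linarith
      · have ht : Real.tanh k ≤ 1 := by
          rw [Real.tanh_eq_sinh_div_cosh, div_le_one hc]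
          nlinarith [Real.exp_pos (-k), Real.cosh_sub_sinh k]
        calc Real.tanh k / k ≤ 1 / k := by gcongr
          _ ≤ 2 / (1 + k) := by
              rw [div_le_div_iff₀ h0 (by linarith)]; linarith

/-- For every real `k`, `1/(1+|k|) ≤ tanh(k)/k ≤ 2/(1+|k|)`
(with `tanh(k)/k` understood to equal `1` at `k = 0`). -/
theorem cww2_bounds (k : ℝ) :
    1 / (1 + |k|) ≤ cww2 k ∧ cww2 k ≤ 2 / (1 + |k|) := by
  rcases le_or_gt 0 k with hk | hk
  · rw [abs_of_nonneg hk]; exact cww2_bounds_nonneg hk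
  · have heq : cww2 k = cww2 (-k) := by
      have hk0 : k ≠ 0 := ne_of_lt hk
      rw [cww2, cww2, if_neg hk0, if_neg (neg_ne_zero.mpr hk0), Real.tanh_neg,
        neg_div_neg_eq]
    rw [abs_of_neg hk, heq]
    exact cww2_bounds_nonneg (by linarith)
end

section
/- For every κ > 0, the derivative of the map k ↦ k·c_ww(k) at κ lies strictly between 0 and 1; in particular the modulational instability index i₂(κ) = ((κ c_ww(κ))')² − 1 is strictly negative for all κ > 0. -/
lemma aux_sinh_lt_mul_cosh (x : ℝ) (hx : 0 < x) : Real.sinh x < x * Real.cosh x := by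
  have key : StrictMonoOn (fun y : ℝ => y * Real.cosh y - Real.sinh y) (Set.Ici 0) := by
    apply strictMonoOn_of_deriv_pos (convex_Ici 0)
    · exact (continuous_id.mul Real.continuous_cosh).sub Real.continuous_sinh |>.continuousOn
    · intro y hy
      rw [interior_Ici] at hy
      have hy' : (0:ℝ) < y := hy
      have hd : HasDerivAt (fun y : ℝ => y * Real.cosh y - Real.sinh y)
          (1 * Real.cosh y + y * Real.sinh y - Real.cosh y) y :=
        ((hasDerivAt_id y).mul (Real.hasDerivAt_cosh y)).sub (Real.hasDerivAt_sinh y)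
      rw [hd.deriv]
      have hs : 0 < Real.sinh y := Real.sinh_pos_iff.2 hy'
      nlinarith
  have := key (Set.self_mem_Ici) (Set.mem_Ici.2 hx.le) hx
  simpa using this

lemma aux_tanh_lt_self (x : ℝ) (hx : 0 < x) : Real.tanh x < x := by
  rw [Real.tanh_eq_sinh_div_cosh, div_lt_iff₀ (Real.cosh_pos _)]
  exact aux_sinh_lt_mul_cosh x hx

lemma aux_tanh_pos (x : ℝ) (hx : 0 < x) : 0 < Real.tanh x := by
  rw [Real.tanh_eq_sinh_div_cosh]
  exact div_pos (Real.sinh_pos_iff.2 hx) (Real.cosh_pos _)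

lemma aux_hasDerivAt_tanh (x : ℝ) : HasDerivAt Real.tanh (1 / Real.cosh x ^ 2) x := by
  have h := (Real.hasDerivAt_sinh x).div (Real.hasDerivAt_cosh x) (Real.cosh_pos (x := x)).ne'
  have e : (Real.cosh x * Real.cosh x - Real.sinh x * Real.sinh x) / Real.cosh x ^ 2
      = 1 / Real.cosh x ^ 2 := by
    have h1 := Real.cosh_sq_sub_sinh_sq x
    congr 1
    nlinarith
  have htf : Real.tanh = fun y => Real.sinh y / Real.cosh y :=
    funext fun y => Real.tanh_eq_sinh_div_cosh y
  rw [htf, ← e]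
  exact h

/-- The water-wave phase speed `c_ww(k) = √(tanh k / k)` (normalized depth and gravity),
extended by `c_ww(0) = 1`. -/
noncomputable def cww (k : ℝ) : ℝ := if k = 0 then 1 else Real.sqrt (Real.tanh k / k)

/-- For every `κ > 0`, the group velocity `(κ c_ww(κ))'` lies strictly between `0` and `1`;
in particular the modulational instability index `i₂(κ) = ((κ c_ww(κ))')² − 1` is strictly
negative for all `κ > 0`. -/
theorem group_velocity_between_zero_and_one (κ : ℝ) (hκ : 0 < κ) :
    0 < deriv (fun k : ℝ => k * cww k) κ ∧
    deriv (fun k : ℝ => k * cww k) κ < 1 ∧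
    (deriv (fun k : ℝ => k * cww k) κ) ^ 2 - 1 < 0 := by
  have hcosh := Real.cosh_pos (x := κ)
  have htpos := aux_tanh_pos κ hκ
  have hgpos : 0 < κ * Real.tanh κ := mul_pos hκ htpos
  have hg : HasDerivAt (fun k : ℝ => k * Real.tanh k)
      (1 * Real.tanh κ + κ * (1 / Real.cosh κ ^ 2)) κ :=
    (hasDerivAt_id κ).mul (aux_hasDerivAt_tanh κ)
  have hf : HasDerivAt (fun k : ℝ => Real.sqrt (k * Real.tanh k))
      ((1 * Real.tanh κ + κ * (1 / Real.cosh κ ^ 2)) / (2 * Real.sqrt (κ * Real.tanh κ))) κ :=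
    hg.sqrt hgpos.ne'
  have hev : (fun k : ℝ => k * cww k) =ᶠ[nhds κ] fun k => Real.sqrt (k * Real.tanh k) := by
    filter_upwards [eventually_gt_nhds hκ] with k hk
    have hk0 : k ≠ 0 := hk.ne'
    simp only [cww, if_neg hk0]
    rw [show k * Real.tanh k = k ^ 2 * (Real.tanh k / k) by field_simp,
      Real.sqrt_mul (sq_nonneg k), Real.sqrt_sq hk.le]
  have hderiv : deriv (fun k : ℝ => k * cww k) κ
      = (1 * Real.tanh κ + κ * (1 / Real.cosh κ ^ 2)) / (2 * Real.sqrt (κ * Real.tanh κ)) := by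
    rw [hev.deriv_eq, hf.deriv]
  rw [hderiv]
  have hsq : 0 < Real.sqrt (κ * Real.tanh κ) := Real.sqrt_pos.2 hgpos
  have hc2 : 0 < 1 / Real.cosh κ ^ 2 := by positivity
  have hNpos : 0 < 1 * Real.tanh κ + κ * (1 / Real.cosh κ ^ 2) := by
    have : 0 < κ * (1 / Real.cosh κ ^ 2) := mul_pos hκ hc2
    linarith
  have h1 : 0 < (1 * Real.tanh κ + κ * (1 / Real.cosh κ ^ 2)) /
      (2 * Real.sqrt (κ * Real.tanh κ)) := by positivity
  have hks : κ < Real.sinh κ * Real.cosh κ := by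
    have h1 : κ < Real.sinh κ := Real.self_lt_sinh_iff.2 hκ
    have h2 : 1 ≤ Real.cosh κ := Real.one_le_cosh κ
    nlinarith [Real.sinh_pos_iff.2 hκ]
  have hN2 : 1 * Real.tanh κ + κ * (1 / Real.cosh κ ^ 2) < 2 * Real.tanh κ := by
    have hlt : κ * (1 / Real.cosh κ ^ 2) < Real.tanh κ := by
      rw [Real.tanh_eq_sinh_div_cosh, lt_div_iff₀ (Real.cosh_pos _),
        show κ * (1 / Real.cosh κ ^ 2) * Real.cosh κ = κ / Real.cosh κ by field_simp,
        div_lt_iff₀ (Real.cosh_pos _)]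
      exact hks
    linarith
  have htsq : Real.tanh κ < Real.sqrt (κ * Real.tanh κ) := by
    rw [show Real.sqrt (κ * Real.tanh κ) = Real.sqrt κ * Real.sqrt (Real.tanh κ) from
      Real.sqrt_mul hκ.le _]
    nlinarith [Real.sq_sqrt htpos.le, Real.sq_sqrt hκ.le, Real.sqrt_pos.2 htpos,
      Real.sqrt_pos.2 hκ, aux_tanh_lt_self κ hκ,
      Real.sqrt_lt_sqrt htpos.le (aux_tanh_lt_self κ hκ)]
  have h2 : (1 * Real.tanh κ + κ * (1 / Real.cosh κ ^ 2)) /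
      (2 * Real.sqrt (κ * Real.tanh κ)) < 1 := by
    rw [div_lt_one (by positivity)]
    linarith
  refine ⟨h1, h2, ?_⟩
  nlinarith
end

section
/- For every κ > 0, the second derivative of the map k ↦ k·c_ww(k) at κ is strictly negative; that is, the modulational instability index i₁(κ) = (κ c_ww(κ))'' satisfies i₁(κ) < 0 for all κ > 0 (equivalently, the group velocity (κ c_ww(κ))' is strictly decreasing on (0,∞)). -/
open Real

lemma tanh_hasDerivAt (x : ℝ) : HasDerivAt Real.tanh (1 - Real.tanh x ^ 2) x := by
  have h := (Real.hasDerivAt_sinh x).div (Real.hasDerivAt_cosh x) (Real.cosh_pos x).ne'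
  have hfun : (fun y => Real.sinh y / Real.cosh y) = Real.tanh := by
    funext y; rw [Real.tanh_eq_sinh_div_cosh]
  rw [show (Real.sinh / Real.cosh) = Real.tanh from hfun] at h
  refine h.congr_deriv ?_
  have hc := Real.cosh_pos x
  have hid := Real.cosh_sq_sub_sinh_sq x
  rw [Real.tanh_eq_sinh_div_cosh]
  field_simp

lemma tanh_pos {x : ℝ} (hx : 0 < x) : 0 < Real.tanh x := by
  rw [Real.tanh_eq_sinh_div_cosh]
  exact div_pos (Real.sinh_pos_iff.2 hx) (Real.cosh_pos x)

lemma tanh_lt_one' (x : ℝ) : Real.tanh x < 1 := by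
  rw [Real.tanh_eq_sinh_div_cosh, div_lt_one (Real.cosh_pos x)]
  have := Real.cosh_sub_sinh x
  nlinarith [Real.exp_pos (-x)]

noncomputable def Nww (k : ℝ) : ℝ := Real.tanh k + k * (1 - Real.tanh k ^ 2)

noncomputable def Fww (k : ℝ) : ℝ := Nww k / (2 * Real.sqrt (k * Real.tanh k))

lemma f_pos {k : ℝ} (hk : 0 < k) : 0 < k * Real.tanh k := mul_pos hk (tanh_pos hk)

lemma hasDerivAt_f (k : ℝ) : HasDerivAt (fun x => x * Real.tanh x) (Nww k) k := by
  have h := (hasDerivAt_id k).mul (tanh_hasDerivAt k)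
  exact h.congr_deriv (by simp [Nww])

lemma hasDerivAt_omega {k : ℝ} (hk : 0 < k) :
    HasDerivAt (fun x => Real.sqrt (x * Real.tanh x)) (Fww k) k := by
  have h := (Real.hasDerivAt_sqrt (f_pos hk).ne').comp k (hasDerivAt_f k)
  refine h.congr_deriv ?_
  simp [Fww]
  ring

lemma hasDerivAt_N (k : ℝ) :
    HasDerivAt Nww (2 * (1 - Real.tanh k ^ 2) * (1 - k * Real.tanh k)) k := by
  have h1 := tanh_hasDerivAt k
  have h2 : HasDerivAt (fun x : ℝ => 1 - Real.tanh x ^ 2)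
      (-(2 * Real.tanh k * (1 - Real.tanh k ^ 2))) k := by
    have := ((tanh_hasDerivAt k).pow 2).const_sub 1
    refine this.congr_deriv ?_
    ring
  have h := h1.add ((hasDerivAt_id k).mul h2)
  refine h.congr_deriv ?_
  simp [Nww]
  ring

lemma sqrt_hasDerivAt {k : ℝ} (hk : 0 < k) :
    HasDerivAt (fun x => 2 * Real.sqrt (x * Real.tanh x)) (Nww k / Real.sqrt (k * Real.tanh k)) k := by
  have h := (hasDerivAt_omega hk).const_mul 2
  refine h.congr_deriv ?_
  rw [Fww]
  have : Real.sqrt (k * Real.tanh k) > 0 := Real.sqrt_pos.2 (f_pos hk)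
  field_simp

noncomputable def Gww (k : ℝ) : ℝ :=
  (2 * (1 - Real.tanh k ^ 2) * (1 - k * Real.tanh k) * (2 * Real.sqrt (k * Real.tanh k))
    - Nww k * (Nww k / Real.sqrt (k * Real.tanh k))) / (2 * Real.sqrt (k * Real.tanh k)) ^ 2

lemma hasDerivAt_F {k : ℝ} (hk : 0 < k) : HasDerivAt Fww (Gww k) k := by
  have hD : (2 : ℝ) * Real.sqrt (k * Real.tanh k) ≠ 0 := by
    have := Real.sqrt_pos.2 (f_pos hk); positivity
  exact (hasDerivAt_N k).div (sqrt_hasDerivAt hk) hD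

lemma G_neg {k : ℝ} (hk : 0 < k) : Gww k < 0 := by
  set t := Real.tanh k with ht
  have ht0 : 0 < t := tanh_pos hk
  have ht1 : t < 1 := tanh_lt_one' k
  have hf : 0 < k * t := mul_pos hk ht0
  have hs : 0 < Real.sqrt (k * t) := Real.sqrt_pos.2 hf
  have hsq : Real.sqrt (k * t) * Real.sqrt (k * t) = k * t := Real.mul_self_sqrt hf.le
  rw [Gww]
  apply div_neg_of_neg_of_pos
  · rw [Nww, ← ht]
    have key : 2 * (2 * (1 - t ^ 2) * (1 - k * t)) * (k * t) - (t + k * (1 - t ^ 2)) ^ 2 < 0 := by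
      nlinarith [sq_nonneg (t - k * (1 - t ^ 2)), mul_pos (mul_pos (mul_pos hk hk) (mul_pos ht0 ht0)) (by nlinarith : (0:ℝ) < 1 - t ^ 2)]
    have expand : 2 * (1 - t ^ 2) * (1 - k * t) * (2 * Real.sqrt (k * t))
        - (t + k * (1 - t ^ 2)) * ((t + k * (1 - t ^ 2)) / Real.sqrt (k * t))
        = (2 * (2 * (1 - t ^ 2) * (1 - k * t)) * (k * t) - (t + k * (1 - t ^ 2)) ^ 2)
          / Real.sqrt (k * t) := by
      set S := Real.sqrt (k * t) with hS
      rw [eq_div_iff hs.ne']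
      field_simp
      nlinarith [hsq]
    rw [expand]
    exact div_neg_of_neg_of_pos key hs
  · positivity

lemma eq_on_Ioi {k : ℝ} (hk : 0 < k) : k * cww k = Real.sqrt (k * Real.tanh k) := by
  rw [cww, if_neg hk.ne']
  rw [show k * Real.tanh k = k ^ 2 * (Real.tanh k / k) by field_simp,
    Real.sqrt_mul (sq_nonneg k), Real.sqrt_sq hk.le]

lemma ev_eq {κ : ℝ} (hκ : 0 < κ) :
    (fun k : ℝ => k * cww k) =ᶠ[nhds κ] fun x => Real.sqrt (x * Real.tanh x) := by
  filter_upwards [isOpen_Ioi.mem_nhds hκ] with x hx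
  exact eq_on_Ioi hx

lemma hasDerivAt_main {κ : ℝ} (hκ : 0 < κ) :
    HasDerivAt (fun k : ℝ => k * cww k) (Fww κ) κ :=
  (hasDerivAt_omega hκ).congr_of_eventuallyEq (ev_eq hκ)

lemma deriv_main_ev {κ : ℝ} (hκ : 0 < κ) :
    deriv (fun k : ℝ => k * cww k) =ᶠ[nhds κ] Fww := by
  filter_upwards [isOpen_Ioi.mem_nhds hκ] with x hx
  exact (hasDerivAt_main hx).deriv

lemma hasDerivAt_deriv_main {κ : ℝ} (hκ : 0 < κ) :
    HasDerivAt (deriv (fun k : ℝ => k * cww k)) (Gww κ) κ :=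
  (hasDerivAt_F hκ).congr_of_eventuallyEq (deriv_main_ev hκ)

/-- For every `κ > 0`, the modulational instability index `i₁(κ) = (κ c_ww(κ))''` is strictly
negative; equivalently, the group velocity `(κ c_ww(κ))'` is strictly decreasing on `(0,∞)`. -/
theorem i1_neg :
    (∀ κ : ℝ, 0 < κ → deriv (deriv (fun k : ℝ => k * cww k)) κ < 0) ∧
    StrictAntiOn (deriv (fun k : ℝ => k * cww k)) (Set.Ioi 0) := by
  constructor
  · intro κ hκ
    rw [(hasDerivAt_deriv_main hκ).deriv]
    exact G_neg hκ
  · apply strictAntiOn_of_deriv_neg (convex_Ioi 0)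
    · intro x hx
      exact ((hasDerivAt_deriv_main hx).differentiableAt).continuousAt.continuousWithinAt
    · intro x hx
      rw [interior_Ioi] at hx
      rw [(hasDerivAt_deriv_main hx).deriv]
      exact G_neg hx
end

section
/- For every κ > 0, the function s ↦ s·(c_ww(κ) + c_ww(κ s)) is strictly increasing on all of ℝ, where c_ww is extended evenly (so c_ww(κ s) = c_ww(κ |s|)). -/
lemma tanh_mono' {x y : ℝ} (h : x ≤ y) : Real.tanh x ≤ Real.tanh y := by
  rw [Real.tanh_eq_sinh_div_cosh, Real.tanh_eq_sinh_div_cosh,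
    div_le_div_iff₀ (Real.cosh_pos x) (Real.cosh_pos y)]
  have h1 : 0 ≤ Real.sinh (y - x) := by
    rw [Real.sinh_nonneg_iff]; linarith
  rw [Real.sinh_sub] at h1
  linarith

lemma tanh_nonneg' {x : ℝ} (h : 0 ≤ x) : 0 ≤ Real.tanh x := by
  have := tanh_mono' h
  simpa using this

lemma cww_pos {k : ℝ} (hk : 0 < k) : 0 < cww k := by
  have htanh : 0 < Real.tanh k := by
    rw [Real.tanh_eq_sinh_div_cosh]
    exact div_pos (Real.sinh_pos_iff.2 hk) (Real.cosh_pos k)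
  rw [cww, if_neg hk.ne']
  exact Real.sqrt_pos.2 (div_pos htanh hk)

/-- For `s ≥ 0`, `s * cww (κ s) = √(s·tanh(κ s)/κ)`. -/
lemma mul_cww_eq {κ : ℝ} (hκ : 0 < κ) {s : ℝ} (hs : 0 ≤ s) :
    s * cww (κ * s) = Real.sqrt (s * Real.tanh (κ * s) / κ) := by
  rcases eq_or_lt_of_le hs with h | h
  · simp [← h]
  · rw [cww, if_neg (by positivity), ← Real.sqrt_sq hs, ← Real.sqrt_mul (sq_nonneg s)]
    congr 1
    field_simp
    rw [Real.sq_sqrt (sq_nonneg s)]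

lemma h_mono {κ : ℝ} (hκ : 0 < κ) : Monotone (fun s : ℝ => s * cww (κ * s)) := by
  have heven : ∀ s : ℝ, cww (κ * (-s)) = cww (κ * s) := by
    intro s
    unfold cww
    rcases eq_or_ne s 0 with rfl | hs
    · simp
    · rw [if_neg (by simp [hκ.ne', hs]), if_neg (by simp [hκ.ne', hs])]
      rw [mul_neg, Real.tanh_neg, neg_div_neg_eq]
  have key : ∀ a b : ℝ, 0 ≤ a → a ≤ b → a * cww (κ * a) ≤ b * cww (κ * b) := by
    intro a b ha hab
    rw [mul_cww_eq hκ ha, mul_cww_eq hκ (ha.trans hab)]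
    apply Real.sqrt_le_sqrt
    apply div_le_div_of_nonneg_right _ hκ.le
    exact mul_le_mul hab (tanh_mono' (by nlinarith)) (tanh_nonneg' (by positivity)) (by linarith)
  intro a b hab
  rcases le_or_gt 0 a with ha | ha
  · exact key a b ha hab
  · rcases le_or_gt 0 b with hb | hb
    · calc a * cww (κ * a) ≤ 0 := by
            have := key 0 (-a) le_rfl (by linarith)
            rw [heven] at this
            simp at this
            nlinarith
        _ ≤ b * cww (κ * b) := by
            have := key 0 b le_rfl hb
            simpa using this
    · have := key (-b) (-a) (by linarith) (by linarith)
      rw [heven, heven] at this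
      show a * cww (κ * a) ≤ b * cww (κ * b)
      nlinarith

/-- For every `κ > 0`, the '+' branch frequency `s ↦ s(c_ww(κ) + c_ww(κ s))` of the linear
dispersion relation is strictly increasing on all of `ℝ`. -/
theorem omega_plus_strictMono (κ : ℝ) (hκ : 0 < κ) :
    StrictMono (fun s : ℝ => s * (cww κ + cww (κ * s))) := by
  have hc : 0 < cww κ := cww_pos hκ
  have h1 : StrictMono (fun s : ℝ => s * cww κ) := fun a b hab =>
    mul_lt_mul_of_pos_right hab hc
  have h2 := h_mono hκ
  intro a b hab
  have := add_lt_add_of_lt_of_le (h1 hab) (h2 hab.le)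
  simpa [mul_add] using this
end

section
/- For every b < 0 and every c ∈ ℝ, there exist k > 0 and λ ∈ ℂ with Re λ > 0 such that (λ − i c k)² = −k²·(c_ww²(k) + 2b); that is, the linearization of the Boussinesq–Whitham equation ∂t²η = c_ww²(|∂x|)∂x²η + ∂x²(η²) about the constant state η = b, in a frame moving with any speed c, admits a Fourier-mode solution e^{λt}e^{ikx} with exponentially growing amplitude. In particular, every negative constant solution is spectrally unstable, however small it is. -/
/-- For every `b < 0` and every `c ∈ ℝ`, there exist `k > 0` and `λ ∈ ℂ` with `Re λ > 0`
such that `(λ − i c k)² = −k²(c_ww²(k) + 2b)`: the linearization of the Boussinesq–Whitham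
equation `∂t²η = c_ww²(|∂x|)∂x²η + ∂x²(η²)` about the constant state `η = b`, in a frame
moving with speed `c`, admits an exponentially growing Fourier-mode solution. Every negative
constant solution is spectrally unstable, however small it is. -/
theorem BW1_negative_constant_unstable (b : ℝ) (hb : b < 0) (c : ℝ) :
    ∃ k : ℝ, 0 < k ∧ ∃ lam : ℂ, 0 < lam.re ∧
      (lam - Complex.I * (c : ℂ) * (k : ℂ)) ^ 2
        = -((k : ℂ)) ^ 2 * ((cww2 k : ℝ) + 2 * b : ℝ) := by
  set k : ℝ := max 1 (-1 / (2 * b)) with hk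
  have hk1 : (1 : ℝ) ≤ k := le_max_left _ _
  have hkpos : 0 < k := lt_of_lt_of_le one_pos hk1
  have hkne : k ≠ 0 := ne_of_gt hkpos
  have hkb : -1 / (2 * b) ≤ k := le_max_right _ _
  -- tanh k / k < 1/k ≤ -2b
  have htanh : Real.tanh k < 1 := by
    rw [Real.tanh_eq_sinh_div_cosh, div_lt_one (Real.cosh_pos k)]
    have := Real.exp_pos (-k)
    rw [Real.sinh_eq, Real.cosh_eq]
    linarith
  have h1 : cww2 k < 1 / k := by
    rw [cww2, if_neg hkne]
    gcongr
  have h2 : 1 / k ≤ -(2 * b) := by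
    rw [div_le_iff₀ hkpos]
    have h2b : 0 < -(2 * b) := by linarith
    have he : -(2*b) * (-1 / (2*b)) = 1 := by field_simp [div_self (show (2*b) ≠ 0 by linarith)]; exact div_self (ne_of_lt hb)
    calc (1:ℝ) = -(2*b) * (-1 / (2*b)) := he.symm
    _ ≤ -(2*b) * k := mul_le_mul_of_nonneg_left hkb (le_of_lt h2b)
  have hA : 0 < -(cww2 k + 2 * b) := by linarith
  set A : ℝ := -(cww2 k + 2 * b) with hAdef
  refine ⟨k, hkpos, (k * Real.sqrt A : ℝ) + Complex.I * c * k, ?_, ?_⟩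
  · simp [Complex.add_re, Complex.mul_re, Complex.I_re]
    positivity
  · have : ((k * Real.sqrt A : ℝ) : ℂ) + Complex.I * c * k - Complex.I * c * k
        = ((k * Real.sqrt A : ℝ) : ℂ) := by ring
    rw [this]
    have hsq : (k * Real.sqrt A) ^ 2 = k ^ 2 * A := by
      rw [mul_pow, Real.sq_sqrt hA.le]
    have : (((k * Real.sqrt A) ^ 2 : ℝ) : ℂ) = ((k ^ 2 * A : ℝ) : ℂ) := by rw [hsq]
    push_cast at this ⊢
    rw [this, hAdef]
    push_cast
    ring
end

section
/- For every real k, |sgn(k) − tanh(k)| ≤ e^{−|k|}, where sgn denotes the sign function (sgn(0) = 0). -/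
lemma one_sub_tanh_bound (k : ℝ) (hk : 0 ≤ k) :
    |1 - Real.tanh k| ≤ Real.exp (-k) := by
  have hc : (0:ℝ) < Real.cosh k := Real.cosh_pos k
  have h1 : 1 - Real.tanh k = Real.exp (-k) / Real.cosh k := by
    rw [Real.tanh_eq_sinh_div_cosh, ← Real.cosh_sub_sinh]
    field_simp
  rw [h1, abs_of_nonneg (by positivity)]
  exact div_le_self (Real.exp_pos _).le (Real.one_le_cosh k)

/-- For every real `k`, `|sgn(k) − tanh(k)| ≤ e^{−|k|}`, where `sgn` is the sign function
(`sgn(0) = 0`). -/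
theorem sign_sub_tanh_bound (k : ℝ) :
    |Real.sign k - Real.tanh k| ≤ Real.exp (-|k|) := by
  rcases lt_trichotomy k 0 with h | h | h
  · rw [Real.sign_of_neg h, abs_of_neg h]
    have := one_sub_tanh_bound (-k) (by linarith)
    rw [Real.tanh_neg] at this
    calc |(-1 : ℝ) - Real.tanh k| = |1 + Real.tanh k| := by rw [← abs_neg]; ring_nf
      _ ≤ Real.exp (- -k) := by rw [← sub_neg_eq_add]; simpa using this
  · simp [h, Real.sign_zero, Real.tanh_zero, Real.exp_nonneg]
  · rw [Real.sign_of_pos h, abs_of_pos h]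
    exact one_sub_tanh_bound k h.le
end
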